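/- For density operators ρ, ρ' and a Hermitian operator σ on a finite-dimensional Hilbert space, and any real c ≥ 0, we have Tr((ρ − cσ)₊) ≤ Tr((ρ' − cσ)₊) + (1/2)‖ρ − ρ'‖₁, where ‖·‖₁ is the trace norm and X₊ is the positive part of the Hermitian operator X. -/

import Mathlib

open Matrix
open scoped ComplexOrder

open Classical in
/-- The positive part `A₊` of a Hermitian matrix `A`, defined via the spectral
decomposition (and `0` if `A` is not Hermitian). -/
noncomputable def posPartOf {n : Type*} [Fintype n] [DecidableEq n] (A : Matrix n n ℂ) :
    Matrix n n ℂ :=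
  if hA : A.IsHermitian then
    (hA.eigenvectorUnitary : Matrix n n ℂ) *
      Matrix.diagonal (fun i => ((max (hA.eigenvalues i) 0 : ℝ) : ℂ)) *
      (star (hA.eigenvectorUnitary : Matrix n n ℂ))
  else 0

open Classical in
/-- The negative part `A₋` of a Hermitian matrix `A` (so that `A = A₊ - A₋`). -/
noncomputable def negPartOf {n : Type*} [Fintype n] [DecidableEq n] (A : Matrix n n ℂ) :
    Matrix n n ℂ :=
  if hA : A.IsHermitian then
    (hA.eigenvectorUnitary : Matrix n n ℂ) *
      Matrix.diagonal (fun i => ((max (-(hA.eigenvalues i)) 0 : ℝ) : ℂ)) *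
      (star (hA.eigenvectorUnitary : Matrix n n ℂ))
  else 0

open Classical in
/-- The spectral projection `{A > 0}` onto the strictly positive eigenspaces of a
Hermitian matrix `A` (and `0` if `A` is not Hermitian). -/
noncomputable def posProjOf {n : Type*} [Fintype n] [DecidableEq n] (A : Matrix n n ℂ) :
    Matrix n n ℂ :=
  if hA : A.IsHermitian then
    (hA.eigenvectorUnitary : Matrix n n ℂ) *
      Matrix.diagonal (fun i => if 0 < hA.eigenvalues i then (1 : ℂ) else 0) *
      (star (hA.eigenvectorUnitary : Matrix n n ℂ))
  else 0

open Classical in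
/-- The trace norm of a Hermitian matrix: the sum of absolute values of eigenvalues. -/
noncomputable def traceNormOf {n : Type*} [Fintype n] [DecidableEq n] (A : Matrix n n ℂ) : ℝ :=
  if hA : A.IsHermitian then ∑ i, |hA.eigenvalues i| else 0
section Aux

variable {n : Type*} [Fintype n] [DecidableEq n]

private lemma conj_trace (U : Matrix.unitaryGroup n ℂ) (D : Matrix n n ℂ) :
    ((U : Matrix n n ℂ) * D * star (U : Matrix n n ℂ)).trace = D.trace := by
  have h : star (U : Matrix n n ℂ) * (U : Matrix n n ℂ) = 1 :=
    Matrix.UnitaryGroup.star_mul_self U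
  rw [Matrix.trace_mul_cycle, h, Matrix.one_mul]

private lemma conj_mul_conj (U : Matrix.unitaryGroup n ℂ) (D1 D2 : Matrix n n ℂ) :
    ((U : Matrix n n ℂ) * D1 * star (U : Matrix n n ℂ)) *
      ((U : Matrix n n ℂ) * D2 * star (U : Matrix n n ℂ)) =
    (U : Matrix n n ℂ) * (D1 * D2) * star (U : Matrix n n ℂ) := by
  have h : star (U : Matrix n n ℂ) * (U : Matrix n n ℂ) = 1 :=
    Matrix.UnitaryGroup.star_mul_self U
  simp only [Matrix.mul_assoc]
  rw [← Matrix.mul_assoc (star (U : Matrix n n ℂ)) (U : Matrix n n ℂ), h, Matrix.one_mul]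

private lemma conj_sub_conj (U : Matrix.unitaryGroup n ℂ) (D1 D2 : Matrix n n ℂ) :
    ((U : Matrix n n ℂ) * D1 * star (U : Matrix n n ℂ)) -
      ((U : Matrix n n ℂ) * D2 * star (U : Matrix n n ℂ)) =
    (U : Matrix n n ℂ) * (D1 - D2) * star (U : Matrix n n ℂ) := by
  rw [Matrix.mul_sub, Matrix.sub_mul]

private lemma conj_posSemidef (U : Matrix.unitaryGroup n ℂ) {d : n → ℂ} (hd : ∀ i, 0 ≤ d i) :
    ((U : Matrix n n ℂ) * Matrix.diagonal d * star (U : Matrix n n ℂ)).PosSemidef := by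
  rw [Matrix.star_eq_conjTranspose]
  exact (Matrix.posSemidef_diagonal_iff.mpr hd).mul_mul_conjTranspose_same _

private lemma trace_re_nonneg_of_psd {M : Matrix n n ℂ} (hM : M.PosSemidef) :
    0 ≤ M.trace.re := by
  have h : M.trace =
      (Matrix.diagonal (RCLike.ofReal ∘ hM.1.eigenvalues) : Matrix n n ℂ).trace := by
    conv_lhs => rw [hM.1.spectral_theorem]
    exact conj_trace _ _
  rw [h, Matrix.trace_diagonal, Complex.re_sum]
  refine Finset.sum_nonneg fun i _ => ?_
  simpa using hM.eigenvalues_nonneg i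

open scoped MatrixOrder in
private lemma trace_mul_re_nonneg {M N : Matrix n n ℂ} (hM : M.PosSemidef)
    (hN : N.PosSemidef) : 0 ≤ (M * N).trace.re := by
  have h : M * N = CFC.sqrt M * (CFC.sqrt M * N) := by
    rw [← Matrix.mul_assoc, CFC.sqrt_mul_sqrt_self M hM.nonneg]
  rw [h, Matrix.trace_mul_comm]
  have h2 : CFC.sqrt M * N * CFC.sqrt M = (CFC.sqrt M)ᴴ * N * CFC.sqrt M := by
    rw [(CFC.sqrt_nonneg M).posSemidef.1.eq]
  have h3 : (CFC.sqrt M * N * CFC.sqrt M).PosSemidef := by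
    rw [h2]; exact hN.conjTranspose_mul_mul_same _
  exact trace_re_nonneg_of_psd h3

/-- Decomposition of a Hermitian matrix into positive and negative parts. -/
private lemma posPartOf_sub_negPartOf {X : Matrix n n ℂ} (hX : X.IsHermitian) :
    posPartOf X - negPartOf X = X := by
  rw [posPartOf, dif_pos hX, negPartOf, dif_pos hX, conj_sub_conj, Matrix.diagonal_sub]
  have hd : (fun i => ((max (hX.eigenvalues i) 0 : ℝ) : ℂ) -
      ((max (-(hX.eigenvalues i)) 0 : ℝ) : ℂ)) = RCLike.ofReal ∘ hX.eigenvalues := by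
    funext i
    rw [← Complex.ofReal_sub, max_zero_sub_max_neg_zero_eq_self]
    rfl
  rw [hd]
  exact hX.spectral_theorem.symm

private lemma posPartOf_posSemidef {X : Matrix n n ℂ} (hX : X.IsHermitian) :
    (posPartOf X).PosSemidef := by
  rw [posPartOf, dif_pos hX]
  exact conj_posSemidef _ fun i => by
    simpa using le_max_right (hX.eigenvalues i) 0

private lemma negPartOf_posSemidef {X : Matrix n n ℂ} (hX : X.IsHermitian) :
    (negPartOf X).PosSemidef := by
  rw [negPartOf, dif_pos hX]
  exact conj_posSemidef _ fun i => by
    simpa using le_max_right (-(hX.eigenvalues i)) 0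

private lemma posProjOf_posSemidef {A : Matrix n n ℂ} (hA : A.IsHermitian) :
    (posProjOf A).PosSemidef := by
  rw [posProjOf, dif_pos hA]
  exact conj_posSemidef _ fun i => by split <;> norm_num

private lemma one_sub_posProjOf_posSemidef {A : Matrix n n ℂ} (hA : A.IsHermitian) :
    ((1 : Matrix n n ℂ) - posProjOf A).PosSemidef := by
  rw [posProjOf, dif_pos hA]
  have h1 : (1 : Matrix n n ℂ) =
      (hA.eigenvectorUnitary : Matrix n n ℂ) * Matrix.diagonal (fun _ => (1 : ℂ)) *
        star (hA.eigenvectorUnitary : Matrix n n ℂ) := by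
    rw [Matrix.diagonal_one, Matrix.mul_one]
    exact (hA.eigenvectorUnitary.2.2).symm
  rw [h1, conj_sub_conj, Matrix.diagonal_sub]
  exact conj_posSemidef _ fun i => by
    split <;> norm_num

/-- Key inequality: for any Hermitian `X` and any PSD `P` with `1 - P` PSD,
`Re Tr (X P) ≤ Re Tr X₊`. -/
private lemma trace_mul_proj_le {X P : Matrix n n ℂ} (hX : X.IsHermitian)
    (hP : P.PosSemidef) (hP' : ((1 : Matrix n n ℂ) - P).PosSemidef) :
    ((X * P).trace).re ≤ ((posPartOf X).trace).re := by
  have hdec : X * P = posPartOf X * P - negPartOf X * P := by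
    rw [← Matrix.sub_mul, posPartOf_sub_negPartOf hX]
  have h1 : 0 ≤ ((negPartOf X * P).trace).re :=
    trace_mul_re_nonneg (negPartOf_posSemidef hX) hP
  have h2 : 0 ≤ ((posPartOf X * ((1 : Matrix n n ℂ) - P)).trace).re :=
    trace_mul_re_nonneg (posPartOf_posSemidef hX) hP'
  have h3 : posPartOf X * ((1 : Matrix n n ℂ) - P) = posPartOf X - posPartOf X * P := by
    rw [Matrix.mul_sub, Matrix.mul_one]
  rw [h3, Matrix.trace_sub, Complex.sub_re] at h2
  rw [hdec, Matrix.trace_sub, Complex.sub_re]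
  linarith

private lemma trace_mul_posProj {A : Matrix n n ℂ} (hA : A.IsHermitian) :
    (A * posProjOf A).trace = (posPartOf A).trace := by
  rw [posProjOf, dif_pos hA, posPartOf, dif_pos hA]
  have e : A * ((hA.eigenvectorUnitary : Matrix n n ℂ) *
      Matrix.diagonal (fun i => if 0 < hA.eigenvalues i then (1 : ℂ) else 0) *
      star (hA.eigenvectorUnitary : Matrix n n ℂ)) =
      (hA.eigenvectorUnitary : Matrix n n ℂ) *
        (Matrix.diagonal (RCLike.ofReal ∘ hA.eigenvalues) *
          Matrix.diagonal (fun i => if 0 < hA.eigenvalues i then (1 : ℂ) else 0)) *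
        star (hA.eigenvectorUnitary : Matrix n n ℂ) := by
    rw [← conj_mul_conj]; congr 1; exact hA.spectral_theorem
  rw [e, Matrix.diagonal_mul_diagonal, conj_trace, conj_trace,
    Matrix.trace_diagonal, Matrix.trace_diagonal]
  refine Finset.sum_congr rfl fun i _ => ?_
  simp only [Function.comp_apply]
  by_cases h : 0 < hA.eigenvalues i
  · rw [if_pos h, mul_one, max_eq_left h.le]; rfl
  · rw [if_neg h, mul_zero, max_eq_right (not_lt.mp h)]
    norm_num

private lemma trace_posPart_re {X : Matrix n n ℂ} (hX : X.IsHermitian) :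
    ((posPartOf X).trace).re = ∑ i, max (hX.eigenvalues i) 0 := by
  rw [posPartOf, dif_pos hX, conj_trace, Matrix.trace_diagonal, Complex.re_sum]
  simp

private lemma trace_re_eq_sum_eigenvalues {X : Matrix n n ℂ} (hX : X.IsHermitian) :
    X.trace.re = ∑ i, hX.eigenvalues i := by
  have h : X.trace =
      (Matrix.diagonal (RCLike.ofReal ∘ hX.eigenvalues) : Matrix n n ℂ).trace := by
    conv_lhs => rw [hX.spectral_theorem]
    exact conj_trace _ _
  rw [h, Matrix.trace_diagonal, Complex.re_sum]
  simp

private lemma smul_isHermitian {σ : Matrix n n ℂ} (hσ : σ.IsHermitian) (c : ℝ) :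
    (c • σ).IsHermitian := by
  have : (c • σ)ᴴ = c • σᴴ := by
    ext i j
    simp [Matrix.conjTranspose_apply, Matrix.smul_apply, star_smul]
  rw [Matrix.IsHermitian, this, hσ.eq]

end Aux

/-- For density operators `ρ, ρ'`, a Hermitian `σ` and `c ≥ 0`,
`Tr (ρ − cσ)₊ ≤ Tr (ρ' − cσ)₊ + (1/2)‖ρ − ρ'‖₁`. -/
theorem trace_posPart_continuity {n : Type*} [Fintype n] [DecidableEq n]
    (ρ ρ' σ : Matrix n n ℂ)
    (hρ : ρ.PosSemidef) (hρtr : ρ.trace = 1)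
    (hρ' : ρ'.PosSemidef) (hρ'tr : ρ'.trace = 1)
    (hσ : σ.IsHermitian) (c : ℝ) (hc : 0 ≤ c) :
    ((posPartOf (ρ - c • σ)).trace).re ≤
      ((posPartOf (ρ' - c • σ)).trace).re + (1 / 2) * traceNormOf (ρ - ρ') := by
  set A := ρ - c • σ with hAdef
  set B := ρ' - c • σ with hBdef
  set Δ := ρ - ρ' with hΔdef
  have hA : A.IsHermitian := hρ.1.sub (smul_isHermitian hσ c)
  have hB : B.IsHermitian := hρ'.1.sub (smul_isHermitian hσ c)
  have hΔ : Δ.IsHermitian := hρ.1.sub hρ'.1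
  have hsplit : A = B + Δ := by rw [hAdef, hBdef, hΔdef]; abel
  have hP := posProjOf_posSemidef hA
  have hP' := one_sub_posProjOf_posSemidef hA
  have h1 : ((posPartOf A).trace).re = ((A * posProjOf A).trace).re := by
    rw [trace_mul_posProj hA]
  have h2 : A * posProjOf A = B * posProjOf A + Δ * posProjOf A := by
    rw [hsplit, Matrix.add_mul]
  have h3 : ((B * posProjOf A).trace).re ≤ ((posPartOf B).trace).re :=
    trace_mul_proj_le hB hP hP'
  have h4 : ((Δ * posProjOf A).trace).re ≤ ((posPartOf Δ).trace).re :=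
    trace_mul_proj_le hΔ hP hP'
  have htr0 : ∑ i, hΔ.eigenvalues i = 0 := by
    rw [← trace_re_eq_sum_eigenvalues hΔ, hΔdef, Matrix.trace_sub, hρtr, hρ'tr]
    simp
  have h5 : ((posPartOf Δ).trace).re = (1 / 2) * traceNormOf Δ := by
    rw [trace_posPart_re hΔ, traceNormOf, dif_pos hΔ]
    have key : ∀ i : n, max (hΔ.eigenvalues i) 0 =
        (|hΔ.eigenvalues i| + hΔ.eigenvalues i) / 2 := by
      intro i
      rcases le_total 0 (hΔ.eigenvalues i) with h | h
      · rw [max_eq_left h, abs_of_nonneg h]; ring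
      · rw [max_eq_right h, abs_of_nonpos h]; ring
    rw [Finset.sum_congr rfl fun i _ => key i, ← Finset.sum_div,
      Finset.sum_add_distrib, htr0, add_zero]
    ring
  rw [h1, h2, Matrix.trace_add, Complex.add_re]
  linarith
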